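/- Let A be a complete regular local ring with perfect residue field of characteristic p, A_n = A[x_1^{1/p^n},…,x_d^{1/p^n}], and M a finitely generated m_A-power-torsion A_∞,0^{nc}-module with finite generating set Σ. Letting M_n = Σ·A_n ⊆ M, one has λ_∞(M) = lim_{n→∞} (1/p^{nd})·length_A(M_n). -/

import Mathlib

universe u


/-- The length of an `R`-module `M`, valued in `ℝ≥0∞`: the supremum of the lengths of chains
of submodules of `M`. -/
noncomputable def moduleLength (R M : Type*) [Semiring R] [AddCommGroup M] [Module R M] :
    ENNReal :=
  ⨆ s : LTSeries (Submodule R M), (s.length : ENNReal)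

/-- The `n`-th level `A_n = A[x_1^{1/pⁿ}, …, x_d^{1/pⁿ}]` of the tower whose union is
`A_∞,0^{nc}`, realized as the subalgebra of `B` generated by the chosen compatible
`pⁿ`-th roots `ξ i n` of the regular system of parameters. -/
noncomputable def rootLevel (A B : Type u) [CommRing A] [CommRing B] [Algebra A B]
    {d : ℕ} (ξ : Fin d → ℕ → B) (n : ℕ) : Subalgebra A B :=
  Algebra.adjoin A (Set.range fun i => ξ i n)

/-- For a `B`-module `M` and a set `S ⊆ M` of generators, the `A`-submodule `S·A_n`
generated by all `A_n`-multiples of elements of `S`. -/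
noncomputable def levelSpan (A B : Type u) [CommRing A] [CommRing B] [Algebra A B]
    {d : ℕ} (ξ : Fin d → ℕ → B) (n : ℕ) (M : Type u) [AddCommGroup M] [Module A M]
    [Module B M] (S : Set M) : Submodule A M :=
  Submodule.span A {y : M | ∃ b ∈ rootLevel A B ξ n, ∃ s ∈ S, y = b • s}

noncomputable def chainSup (γ : Type*) [Preorder γ] : ENNReal :=
  ⨆ s : LTSeries γ, (s.length : ENNReal)

lemma chainSup_le_of_strictMono {γ δ : Type*} [Preorder γ] [Preorder δ] (f : γ → δ)
    (hf : StrictMono f) : chainSup γ ≤ chainSup δ :=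
  iSup_le fun s => le_iSup_of_le (s.map f hf) (by simp)

lemma chainSup_subsingleton {γ : Type*} [Preorder γ] [Subsingleton γ] : chainSup γ = 0 := by
  refine le_antisymm (iSup_le fun s => ?_) zero_le
  have : s.length = 0 := by
    by_contra h
    have h1 : (⟨0, by omega⟩ : Fin (s.length + 1)) < ⟨s.length, by omega⟩ := by
      simp [Fin.lt_def]; omega
    have h2 := s.strictMono h1
    rw [Subsingleton.elim (s.toFun _) (s.toFun ⟨s.length, by omega⟩)] at h2
    exact lt_irrefl _ h2
  simp [this]

lemma exists_pair_chain {γ δ : Type*} [PartialOrder γ] [PartialOrder δ] (s : LTSeries (γ × δ)) :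
    ∃ (t : LTSeries γ) (u : LTSeries δ), s.length ≤ t.length + u.length ∧
      t.last = s.last.1 ∧ u.last = s.last.2 := by
  obtain ⟨n, hn⟩ : ∃ n, s.length = n := ⟨_, rfl⟩
  induction n generalizing s with
  | zero =>
      exact ⟨RelSeries.singleton _ s.last.1, RelSeries.singleton _ s.last.2, by simp [hn],
        rfl, rfl⟩
  | succ n ih =>
      have h0 : s.length ≠ 0 := by omega
      obtain ⟨t, u, hlen, ht, hu⟩ := ih s.eraseLast (by simp [hn])
      have hlen' : n ≤ t.length + u.length := by
        have he : s.eraseLast.length = n := by simp [hn]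
        omega
      have hrel : s.eraseLast.last < s.last := s.eraseLast_last_rel_last h0
      rcases Prod.lt_iff.mp hrel with ⟨h1, h2⟩ | ⟨h1, h2⟩
      · rcases eq_or_lt_of_le h2 with h2 | h2
        · refine ⟨t.snoc s.last.1 (ht ▸ h1), u, ?_, by simp, hu.trans h2⟩
          simp only [RelSeries.snoc_length]
          omega
        · refine ⟨t.snoc s.last.1 (ht ▸ h1), u.snoc s.last.2 (hu ▸ h2), ?_, by simp, by simp⟩
          simp only [RelSeries.snoc_length]
          omega
      · rcases eq_or_lt_of_le h1 with h1 | h1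
        · refine ⟨t, u.snoc s.last.2 (hu ▸ h2), ?_, ht.trans h1, by simp⟩
          simp only [RelSeries.snoc_length]
          omega
        · refine ⟨t.snoc s.last.1 (ht ▸ h1), u.snoc s.last.2 (hu ▸ h2), ?_, by simp, by simp⟩
          simp only [RelSeries.snoc_length]
          omega

lemma chainSup_prod_le (γ δ : Type*) [PartialOrder γ] [PartialOrder δ] :
    chainSup (γ × δ) ≤ chainSup γ + chainSup δ := by
  refine iSup_le fun s => ?_
  obtain ⟨t, u, hlen, -, -⟩ := exists_pair_chain s
  calc (s.length : ENNReal) ≤ (t.length : ENNReal) + (u.length : ENNReal) := by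
        exact_mod_cast hlen
    _ ≤ chainSup γ + chainSup δ := add_le_add (le_iSup (fun t : LTSeries γ => (t.length : ENNReal)) t) (le_iSup (fun u : LTSeries δ => (u.length : ENNReal)) u)

section ModLength
variable {R M M₂ : Type*} [Ring R] [AddCommGroup M] [AddCommGroup M₂] [Module R M] [Module R M₂]

lemma moduleLength_eq_chainSup : moduleLength R M = chainSup (Submodule R M) := rfl

lemma moduleLength_le_of_injective (f : M →ₗ[R] M₂) (hf : Function.Injective f) :
    moduleLength R M ≤ moduleLength R M₂ := by
  rw [moduleLength_eq_chainSup, moduleLength_eq_chainSup]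
  refine chainSup_le_of_strictMono (Submodule.map f) fun P Q h => ?_
  exact lt_of_le_of_ne (Submodule.map_mono h.le)
    fun e => h.ne (Submodule.map_injective_of_injective hf e)

lemma moduleLength_le_of_surjective (f : M →ₗ[R] M₂) (hf : Function.Surjective f) :
    moduleLength R M₂ ≤ moduleLength R M := by
  rw [moduleLength_eq_chainSup, moduleLength_eq_chainSup]
  refine chainSup_le_of_strictMono (Submodule.comap f) fun P Q h => ?_
  exact lt_of_le_of_ne (Submodule.comap_mono h.le)
    fun e => h.ne (Submodule.comap_injective_of_surjective hf e)

lemma moduleLength_le_add_quotient (N : Submodule R M) :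
    moduleLength R M ≤ moduleLength R N + moduleLength R (M ⧸ N) := by
  rw [moduleLength_eq_chainSup, moduleLength_eq_chainSup, moduleLength_eq_chainSup]
  refine le_trans (chainSup_le_of_strictMono
    (fun W : Submodule R M => ((Submodule.comap N.subtype W, Submodule.map N.mkQ W) :
      Submodule R N × Submodule R (M ⧸ N))) fun P Q h => ?_) (chainSup_prod_le _ _)
  refine lt_of_le_of_ne ⟨Submodule.comap_mono h.le, Submodule.map_mono h.le⟩ fun e => ?_
  have e1 : Submodule.comap N.subtype P = Submodule.comap N.subtype Q := congrArg Prod.fst e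
  have e2 : Submodule.map N.mkQ P = Submodule.map N.mkQ Q := congrArg Prod.snd e
  have e1' : N ⊓ P = N ⊓ Q := by
    rw [← Submodule.map_comap_subtype, ← Submodule.map_comap_subtype, e1]
  have e2' : N ⊔ P = N ⊔ Q := by
    rw [← Submodule.comap_map_mkQ, ← Submodule.comap_map_mkQ, e2]
  refine h.ne (eq_of_le_of_inf_le_of_sup_le (z := N) h.le ?_ ?_)
  · rw [inf_comm Q N, ← e1', inf_comm]
  · rw [sup_comm Q N, ← e2', sup_comm]

lemma moduleLength_mono {P Q : Submodule R M} (h : P ≤ Q) :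
    moduleLength R P ≤ moduleLength R Q :=
  moduleLength_le_of_injective (Submodule.inclusion h) (Submodule.inclusion_injective h)

lemma moduleLength_map_le (f : M →ₗ[R] M₂) (W : Submodule R M) :
    moduleLength R (Submodule.map f W) ≤ moduleLength R W := by
  refine moduleLength_le_of_surjective
    (f.restrict (p := W) (q := Submodule.map f W) fun x hx => Submodule.mem_map_of_mem hx) ?_
  rintro ⟨y, hy⟩
  obtain ⟨x, hx, rfl⟩ := hy
  exact ⟨⟨x, hx⟩, rfl⟩

lemma moduleLength_sup_le (P Q : Submodule R M) :
    moduleLength R ↥(P ⊔ Q) ≤ moduleLength R ↥P + moduleLength R ↥Q := by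
  set N' : Submodule R ↥(P ⊔ Q) := Submodule.comap (P ⊔ Q).subtype P with hN'
  have h1 : moduleLength R ↥(P ⊔ Q) ≤ moduleLength R N' + moduleLength R (↥(P ⊔ Q) ⧸ N') :=
    moduleLength_le_add_quotient N'
  have h2 : moduleLength R N' ≤ moduleLength R ↥P := by
    refine moduleLength_le_of_injective
      (((P ⊔ Q).subtype).restrict (p := N') (q := P) fun x hx => hx) ?_
    intro a b hab
    simp only [LinearMap.restrict_apply, Subtype.mk.injEq, Submodule.subtype_apply] at hab
    exact Subtype.ext (Subtype.ext hab)
  have h3 : moduleLength R (↥(P ⊔ Q) ⧸ N') ≤ moduleLength R ↥Q := by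
    refine moduleLength_le_of_surjective
      (N'.mkQ ∘ₗ Submodule.inclusion (le_sup_right (a := P) (b := Q))) ?_
    intro z
    obtain ⟨y, rfl⟩ := N'.mkQ_surjective z
    obtain ⟨p, hp, q, hq, hpq⟩ := Submodule.mem_sup.mp y.2
    refine ⟨⟨q, hq⟩, ?_⟩
    simp only [LinearMap.comp_apply, Submodule.mkQ_apply]
    rw [Submodule.Quotient.eq]
    have hval : ((Submodule.inclusion (le_sup_right (a := P) (b := Q)) ⟨q, hq⟩
        - y : ↥(P ⊔ Q)) : M) = -p := by
      push_cast [Submodule.coe_inclusion]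
      rw [← hpq]
      abel
    have : (Submodule.inclusion (le_sup_right (a := P) (b := Q)) ⟨q, hq⟩
        - y : ↥(P ⊔ Q)) ∈ N' := by
      simp only [hN', Submodule.mem_comap, Submodule.subtype_apply, hval]
      exact neg_mem hp
    exact this
  exact le_trans h1 (add_le_add h2 h3)

lemma moduleLength_bot_eq_zero : moduleLength R (↥(⊥ : Submodule R M)) = 0 := by
  have : Subsingleton (Submodule R ↥(⊥ : Submodule R M)) := by
    constructor
    intro a b
    have : Subsingleton ↥(⊥ : Submodule R M) := by
      constructor; rintro ⟨a, ha⟩ ⟨b, hb⟩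
      simp only [Submodule.mem_bot] at ha hb
      simp [ha, hb]
    exact Subsingleton.elim a b
  exact chainSup_subsingleton

lemma moduleLength_finsetSup_le {ι : Type*} (F : Finset ι) (N : ι → Submodule R M) :
    moduleLength R ↥(F.sup N) ≤ ∑ i ∈ F, moduleLength R ↥(N i) := by
  classical
  induction F using Finset.induction with
  | empty => rw [Finset.sup_empty, Finset.sum_empty]; exact le_of_eq moduleLength_bot_eq_zero
  | insert a F hnot ih =>
      rw [Finset.sup_insert, Finset.sum_insert hnot]
      exact le_trans (moduleLength_sup_le _ _) (add_le_add le_rfl ih)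

lemma moduleLength_iSup_le {ι : Type*} [Fintype ι] (N : ι → Submodule R M) :
    moduleLength R ↥(⨆ i, N i) ≤ ∑ i, moduleLength R ↥(N i) := by
  classical
  have : (⨆ i, N i) = Finset.univ.sup N := by
    rw [Finset.sup_univ_eq_iSup]
  rw [this]
  exact moduleLength_finsetSup_le _ _
end ModLength

section Alg
variable (A B : Type u) [CommRing A] [CommRing B] [Algebra A B]
  {d : ℕ} (ξ : Fin d → ℕ → B) (M : Type u) [AddCommGroup M] [Module A M]
  [Module B M] [IsScalarTower A B M]

lemma smul_comm_ABM (a : A) (b : B) (m : M) : a • (b • m) = b • (a • m) := by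
  rw [← algebraMap_smul B a (b • m), ← mul_smul, mul_comm, mul_smul, algebraMap_smul]

/-- Scalar multiplication by `c : B` as an `A`-linear endomorphism of `M`. -/
noncomputable def smulMap (c : B) : M →ₗ[A] M where
  toFun m := c • m
  map_add' := smul_add c
  map_smul' a m := (smul_comm_ABM A B M a c m).symm

/-- `b ↦ b • s` as an `A`-linear map `B →ₗ[A] M`. -/
noncomputable def toMod (s : M) : B →ₗ[A] M where
  toFun b := b • s
  map_add' b b' := add_smul b b' s
  map_smul' a b := smul_assoc a b s

lemma levelSpan_eq_iSup (n : ℕ) (S : Set M) :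
    levelSpan A B ξ n M S = ⨆ s ∈ S, Submodule.map (toMod A B M s)
      (Subalgebra.toSubmodule (rootLevel A B ξ n)) := by
  refine le_antisymm (Submodule.span_le.mpr ?_) (iSup₂_le fun s hs => ?_)
  · rintro y ⟨b, hb, s, hs, rfl⟩
    refine Submodule.mem_iSup_of_mem s (Submodule.mem_iSup_of_mem hs ?_)
    exact ⟨b, hb, rfl⟩
  · rintro y ⟨b, hb, rfl⟩
    exact Submodule.subset_span ⟨b, hb, s, hs, rfl⟩

variable {p : ℕ}

lemma rootLevel_mono (hξ : ∀ i n, ξ i (n + 1) ^ p = ξ i n) (hp : 0 < p) : Monotone (rootLevel A B ξ) := by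
  refine monotone_nat_of_le_succ fun n => ?_
  rw [rootLevel, Algebra.adjoin_le_iff]
  rintro y ⟨i, rfl⟩
  show ξ i n ∈ rootLevel A B ξ (n + 1)
  rw [← hξ i n]
  exact pow_mem (Algebra.subset_adjoin (Set.mem_range_self i)) p

lemma levelSpan_mono_level (hξ : ∀ i n, ξ i (n + 1) ^ p = ξ i n) (hp : 0 < p)
    {m n : ℕ} (h : m ≤ n) (S : Set M) :
    levelSpan A B ξ m M S ≤ levelSpan A B ξ n M S := by
  refine Submodule.span_mono ?_
  rintro y ⟨b, hb, s, hs, rfl⟩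
  exact ⟨b, rootLevel_mono A B ξ hξ hp h hb, s, hs, rfl⟩

lemma smul_mem_levelSpan {n : ℕ} {b : B} (hb : b ∈ rootLevel A B ξ n) {S : Set M} {x : M}
    (hx : x ∈ levelSpan A B ξ n M S) : b • x ∈ levelSpan A B ξ n M S := by
  induction hx using Submodule.span_induction with
  | mem y hy =>
      obtain ⟨b', hb', s, hs, rfl⟩ := hy
      rw [← mul_smul]
      exact Submodule.subset_span ⟨b * b', mul_mem hb hb', s, hs, rfl⟩
  | zero => simpa using Submodule.zero_mem _
  | add y z _ _ hy hz => rw [smul_add]; exact Submodule.add_mem _ hy hz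
  | smul a y _ hy =>
      rw [← smul_comm_ABM A B M a b y]
      exact Submodule.smul_mem _ a hy

lemma mem_levelSpan_self {n : ℕ} {S : Set M} {s : M} (hs : s ∈ S) :
    s ∈ levelSpan A B ξ n M S :=
  Submodule.subset_span ⟨1, one_mem _, s, hs, (one_smul B s).symm⟩

lemma levelSpan_le_levelSpan {n : ℕ} {S T : Set M}
    (h : ∀ s ∈ S, s ∈ levelSpan A B ξ n M T) :
    levelSpan A B ξ n M S ≤ levelSpan A B ξ n M T := by
  refine Submodule.span_le.mpr ?_
  rintro y ⟨b, hb, s, hs, rfl⟩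
  exact smul_mem_levelSpan A B ξ M hb (h s hs)

lemma exists_level_of_mem_span (hξ : ∀ i n, ξ i (n + 1) ^ p = ξ i n) (hunion : ∀ b : B, ∃ n, b ∈ rootLevel A B ξ n) (hp : 0 < p)
    {T : Set M} {t : M} (ht : t ∈ Submodule.span B T) :
    ∃ n, t ∈ levelSpan A B ξ n M T := by
  induction ht using Submodule.span_induction with
  | mem y hy => exact ⟨0, mem_levelSpan_self A B ξ M hy⟩
  | zero => exact ⟨0, Submodule.zero_mem _⟩
  | add y z _ _ hy hz =>
      obtain ⟨ny, hy⟩ := hy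
      obtain ⟨nz, hz⟩ := hz
      exact ⟨max ny nz, Submodule.add_mem _
        (levelSpan_mono_level A B ξ M hξ hp (le_max_left _ _) T hy)
        (levelSpan_mono_level A B ξ M hξ hp (le_max_right _ _) T hz)⟩
  | smul b y _ hy =>
      obtain ⟨ny, hy⟩ := hy
      obtain ⟨nb, hb⟩ := hunion b
      exact ⟨max ny nb, smul_mem_levelSpan A B ξ M
        (rootLevel_mono A B ξ hξ hp (le_max_right _ _) hb)
        (levelSpan_mono_level A B ξ M hξ hp (le_max_left _ _) T hy)⟩

lemma exists_level_finset (hξ : ∀ i n, ξ i (n + 1) ^ p = ξ i n) (hunion : ∀ b : B, ∃ n, b ∈ rootLevel A B ξ n) (hp : 0 < p)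
    {T : Set M} (S : Finset M) (hS : ∀ s ∈ S, (s : M) ∈ Submodule.span B T) :
    ∃ n, ∀ s ∈ S, s ∈ levelSpan A B ξ n M T := by
  classical
  induction S using Finset.induction with
  | empty => exact ⟨0, by simp⟩
  | insert a F hnot ih =>
      obtain ⟨n1, hn1⟩ := ih fun s hs => hS s (Finset.mem_insert_of_mem hs)
      obtain ⟨n2, hn2⟩ := exists_level_of_mem_span A B ξ M hξ hunion hp
        (hS a (Finset.mem_insert_self a F))
      refine ⟨max n1 n2, fun s hs => ?_⟩
      rcases Finset.mem_insert.mp hs with rfl | hs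
      · exact levelSpan_mono_level A B ξ M hξ hp (le_max_right _ _) T hn2
      · exact levelSpan_mono_level A B ξ M hξ hp (le_max_left _ _) T (hn1 s hs)

end Alg

section Step
variable (A B : Type u) [CommRing A] [CommRing B] [Algebra A B]
  {d : ℕ} (ξ : Fin d → ℕ → B) (M : Type u) [AddCommGroup M] [Module A M]
  [Module B M] [IsScalarTower A B M] {p : ℕ}

lemma rootLevel_succ_le (hξ : ∀ i n, ξ i (n + 1) ^ p = ξ i n) (hp2 : 1 < p) (n : ℕ) :
    Subalgebra.toSubmodule (rootLevel A B ξ (n + 1)) ≤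
      ⨆ e : Fin d → Fin p, Submodule.map
        (LinearMap.mulLeft A (∏ i, ξ i (n + 1) ^ (e i : ℕ)))
        (Subalgebra.toSubmodule (rootLevel A B ξ n)) := by
  haveI : NeZero p := ⟨by omega⟩
  set An := Subalgebra.toSubmodule (rootLevel A B ξ n) with hAn
  set mon : (Fin d → Fin p) → B := fun e => ∏ i, ξ i (n + 1) ^ (e i : ℕ) with hmon
  set V : Submodule A B := ⨆ e, Submodule.map (LinearMap.mulLeft A (mon e)) An with hV
  have hmemV : ∀ (e : Fin d → Fin p) (c : B), c ∈ rootLevel A B ξ n → mon e * c ∈ V :=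
    fun e c hc => Submodule.mem_iSup_of_mem e ⟨c, hc, rfl⟩
  have h1V : (1 : B) ∈ V := by
    have h0 : (1 : B) = mon 0 * 1 := by simp [hmon]
    rw [h0]
    exact hmemV 0 1 (one_mem _)
  have hkey : ∀ (e e' : Fin d → Fin p) (c c' : B), c ∈ rootLevel A B ξ n →
      c' ∈ rootLevel A B ξ n → (mon e * c) * (mon e' * c') ∈ V := by
    intro e e' c c' hc hc'
    set q : Fin d → ℕ := fun i => ((e i : ℕ) + (e' i : ℕ)) / p with hq
    set r : Fin d → Fin p := fun i => ⟨((e i : ℕ) + (e' i : ℕ)) % p,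
      Nat.mod_lt _ (by omega)⟩ with hr
    have hfac : ∀ i, ξ i (n + 1) ^ ((e i : ℕ) + (e' i : ℕ))
        = ξ i (n + 1) ^ (r i : ℕ) * ξ i n ^ q i := by
      intro i
      conv_lhs => rw [show (e i : ℕ) + (e' i : ℕ) = (r i : ℕ) + p * q i from
        (Nat.mod_add_div _ _).symm]
      rw [pow_add, pow_mul, hξ]
    have hprod : mon e * mon e' = mon r * ∏ i, ξ i n ^ q i := by
      calc mon e * mon e' = ∏ i, ξ i (n + 1) ^ ((e i : ℕ) + (e' i : ℕ)) := by
            rw [hmon, ← Finset.prod_mul_distrib]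
            exact Finset.prod_congr rfl fun i _ => (pow_add _ _ _).symm
        _ = ∏ i, (ξ i (n + 1) ^ (r i : ℕ) * ξ i n ^ q i) :=
            Finset.prod_congr rfl fun i _ => hfac i
        _ = mon r * ∏ i, ξ i n ^ q i := by rw [hmon, Finset.prod_mul_distrib]
    have hw : (∏ i, ξ i n ^ q i) ∈ rootLevel A B ξ n :=
      prod_mem fun i _ => pow_mem (Algebra.subset_adjoin (Set.mem_range_self i)) _
    have : (mon e * c) * (mon e' * c') = mon r * ((∏ i, ξ i n ^ q i) * (c * c')) := by
      rw [show (mon e * c) * (mon e' * c') = (mon e * mon e') * (c * c') by ring, hprod]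
      ring
    rw [this]
    exact hmemV r _ (mul_mem hw (mul_mem hc hc'))
  have hmul : ∀ x ∈ V, ∀ y ∈ V, x * y ∈ V := by
    intro x hx
    refine Submodule.iSup_induction (motive := fun x => ∀ y ∈ V, x * y ∈ V) _ hx ?_ ?_ ?_
    · rintro e x ⟨c, hc, rfl⟩ y hy
      refine Submodule.iSup_induction
        (motive := fun y => (LinearMap.mulLeft A (mon e)) c * y ∈ V) _ hy ?_ ?_ ?_
      · rintro e' y ⟨c', hc', rfl⟩
        exact hkey e e' c c' hc hc'
      · simp
      · intro y z hy hz
        rw [mul_add]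
        exact add_mem hy hz
    · intro y hy
      rw [zero_mul]
      exact zero_mem _
    · intro a b ha hb y hy
      rw [add_mul]
      exact add_mem (ha y hy) (hb y hy)
  have hValg : rootLevel A B ξ (n + 1) ≤
      Submodule.toSubalgebra V h1V (fun x y hx hy => hmul x hx y hy) := by
    refine Algebra.adjoin_le ?_
    rintro y ⟨i, rfl⟩
    show ξ i (n + 1) ∈ V
    have hmone : mon (fun j => if j = i then (⟨1, by omega⟩ : Fin p) else 0) = ξ i (n + 1) := by
      rw [hmon]
      simp only
      rw [Finset.prod_eq_single i]
      · simp
      · intro j _ hji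
        simp [hji]
      · simp
    rw [← mul_one (ξ i (n + 1)), ← hmone]
    exact hmemV _ 1 (one_mem _)
  intro x hx
  exact hValg hx

lemma levelSpan_succ_le (hξ : ∀ i n, ξ i (n + 1) ^ p = ξ i n) (hp2 : 1 < p) (n : ℕ)
    (S : Set M) :
    levelSpan A B ξ (n + 1) M S ≤ ⨆ e : Fin d → Fin p,
      Submodule.map (smulMap A B M (∏ i, ξ i (n + 1) ^ (e i : ℕ)))
        (levelSpan A B ξ n M S) := by
  rw [levelSpan_eq_iSup]
  refine iSup₂_le fun s hs => ?_
  have hbase : Submodule.map (toMod A B M s)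
      (Subalgebra.toSubmodule (rootLevel A B ξ n)) ≤ levelSpan A B ξ n M S := by
    rintro y ⟨c, hc, rfl⟩
    exact Submodule.subset_span ⟨c, hc, s, hs, rfl⟩
  calc Submodule.map (toMod A B M s) (Subalgebra.toSubmodule (rootLevel A B ξ (n + 1)))
      ≤ Submodule.map (toMod A B M s) (⨆ e : Fin d → Fin p, Submodule.map
          (LinearMap.mulLeft A (∏ i, ξ i (n + 1) ^ (e i : ℕ)))
          (Subalgebra.toSubmodule (rootLevel A B ξ n))) :=
        Submodule.map_mono (rootLevel_succ_le A B ξ hξ hp2 n)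
    _ = ⨆ e : Fin d → Fin p, Submodule.map (toMod A B M s) (Submodule.map
          (LinearMap.mulLeft A (∏ i, ξ i (n + 1) ^ (e i : ℕ)))
          (Subalgebra.toSubmodule (rootLevel A B ξ n))) := Submodule.map_iSup _ _
    _ ≤ ⨆ e : Fin d → Fin p, Submodule.map (smulMap A B M (∏ i, ξ i (n + 1) ^ (e i : ℕ)))
          (levelSpan A B ξ n M S) := by
        refine iSup_mono fun e => ?_
        rw [← Submodule.map_comp]
        have hcomp : (toMod A B M s).comp (LinearMap.mulLeft A (∏ i, ξ i (n + 1) ^ (e i : ℕ)))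
            = (smulMap A B M (∏ i, ξ i (n + 1) ^ (e i : ℕ))).comp (toMod A B M s) :=
          LinearMap.ext fun c => (mul_smul _ c s)
        rw [hcomp, Submodule.map_comp]
        exact Submodule.map_mono hbase

end Step


open IsLocalRing

/-- **Faltings' normalized length** of an `A_∞,0^{nc}`-module `M` (where
`B = A_∞,0^{nc} = ∪ₙ Aₙ`): the supremum, over finitely generated `B`-submodules `N` of `M`,
of the infimum over finite generating sets `S` of `N` and levels `n` of
`length_A(S·A_n)/p^{nd}`. -/
noncomputable def normalizedLength (A B : Type u) [CommRing A] [CommRing B] [Algebra A B]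
    (p : ℕ) {d : ℕ} (ξ : Fin d → ℕ → B) (M : Type u) [AddCommGroup M] [Module A M]
    [Module B M] : ENNReal :=
  ⨆ (N : Submodule B M) (_ : N.FG),
    ⨅ (S : Finset M) (_ : Submodule.span B (S : Set M) = N) (n : ℕ),
      moduleLength A ↥(levelSpan A B ξ n M (S : Set M)) / (p : ENNReal) ^ (n * d)


section Length
variable (A B : Type u) [CommRing A] [CommRing B] [Algebra A B]
  {d : ℕ} (ξ : Fin d → ℕ → B) (M : Type u) [AddCommGroup M] [Module A M]
  [Module B M] [IsScalarTower A B M] {p : ℕ}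

lemma moduleLength_levelSpan_succ_le (hξ : ∀ i n, ξ i (n + 1) ^ p = ξ i n) (hp2 : 1 < p)
    (n : ℕ) (S : Set M) :
    moduleLength A ↥(levelSpan A B ξ (n + 1) M S) ≤
      (p : ENNReal) ^ d * moduleLength A ↥(levelSpan A B ξ n M S) := by
  classical
  calc moduleLength A ↥(levelSpan A B ξ (n + 1) M S)
      ≤ moduleLength A ↥(⨆ e : Fin d → Fin p,
          Submodule.map (smulMap A B M (∏ i, ξ i (n + 1) ^ (e i : ℕ)))
            (levelSpan A B ξ n M S)) :=
        moduleLength_mono (levelSpan_succ_le A B ξ M hξ hp2 n S)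
    _ ≤ ∑ e : Fin d → Fin p, moduleLength A
          ↥(Submodule.map (smulMap A B M (∏ i, ξ i (n + 1) ^ (e i : ℕ)))
            (levelSpan A B ξ n M S)) := moduleLength_iSup_le _
    _ ≤ ∑ _e : Fin d → Fin p, moduleLength A ↥(levelSpan A B ξ n M S) :=
        Finset.sum_le_sum fun e _ => moduleLength_map_le _ _
    _ = (p : ENNReal) ^ d * moduleLength A ↥(levelSpan A B ξ n M S) := by
        rw [Finset.sum_const, Finset.card_univ, Fintype.card_fun, Fintype.card_fin,
          Fintype.card_fin, nsmul_eq_mul, Nat.cast_pow]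

lemma normSeq_antitone (hξ : ∀ i n, ξ i (n + 1) ^ p = ξ i n) (hp2 : 1 < p) (S : Set M) :
    Antitone (fun n => moduleLength A ↥(levelSpan A B ξ n M S) / (p : ENNReal) ^ (n * d)) := by
  have hp0 : (p : ENNReal) ^ d ≠ 0 := by
    simp only [ne_eq, pow_eq_zero_iff', Nat.cast_eq_zero]
    intro h
    omega
  have hptop : (p : ENNReal) ^ d ≠ ⊤ := by
    refine ENNReal.pow_ne_top ?_
    exact ENNReal.natCast_ne_top p
  refine antitone_nat_of_succ_le fun n => ?_
  calc moduleLength A ↥(levelSpan A B ξ (n + 1) M S) / (p : ENNReal) ^ ((n + 1) * d)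
      ≤ ((p : ENNReal) ^ d * moduleLength A ↥(levelSpan A B ξ n M S)) /
          (p : ENNReal) ^ ((n + 1) * d) :=
        ENNReal.div_le_div_right (moduleLength_levelSpan_succ_le A B ξ M hξ hp2 n S) _
    _ = ((p : ENNReal) ^ d * moduleLength A ↥(levelSpan A B ξ n M S)) /
          ((p : ENNReal) ^ d * (p : ENNReal) ^ (n * d)) := by
        rw [show (n + 1) * d = d + n * d by ring, pow_add]
    _ = moduleLength A ↥(levelSpan A B ξ n M S) / (p : ENNReal) ^ (n * d) :=
        ENNReal.mul_div_mul_left _ _ hp0 hptop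

end Length

/-- Let `A` be a complete regular local ring with perfect residue field of characteristic
`p`, `Aₙ = A[x₁^{1/pⁿ}, …, x_d^{1/pⁿ}]`, and `M` a finitely generated `m_A`-power-torsion
`A_∞,0^{nc}`-module with finite generating set `Σ`.  Letting `Mₙ = Σ·Aₙ ⊆ M`, one has
`λ_∞(M) = lim_{n→∞} (1/p^{nd})·length_A(Mₙ)`. -/
theorem normalizedLength_eq_lim_of_fg
    (A B : Type u) [CommRing A] [IsNoetherianRing A] [IsLocalRing A]
    [IsAdicComplete (maximalIdeal A) A] (p : ℕ) [Fact p.Prime]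
    [CharP (ResidueField A) p] [ExpChar (ResidueField A) p] [PerfectRing (ResidueField A) p]
    [CommRing B] [Algebra A B] (hinj : Function.Injective (algebraMap A B))
    (d : ℕ) (hdim : ringKrullDim A = d) (x : Fin d → A)
    (hx : Ideal.span (Set.range x) = maximalIdeal A)
    (ξ : Fin d → ℕ → B) (hξ0 : ∀ i, ξ i 0 = algebraMap A B (x i))
    (hξ : ∀ i n, ξ i (n + 1) ^ p = ξ i n)
    (hunion : ∀ b : B, ∃ n, b ∈ rootLevel A B ξ n)
    (hfree : ∀ n, Module.Free A ↥(rootLevel A B ξ n) ∧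
      Module.finrank A ↥(rootLevel A B ξ n) = p ^ (n * d))
    (M : Type u) [AddCommGroup M] [Module A M] [Module B M] [IsScalarTower A B M]
    (htor : ∃ k : ℕ, ∀ a ∈ maximalIdeal A ^ k, ∀ m : M, a • m = 0)
    (Sg : Finset M) (hSg : Submodule.span B (Sg : Set M) = ⊤) :
    Filter.Tendsto
      (fun n : ℕ =>
        moduleLength A ↥(levelSpan A B ξ n M (Sg : Set M)) / (p : ENNReal) ^ (n * d))
      Filter.atTop (nhds (normalizedLength A B p ξ M)) := by
  classical
  have hp2 : 1 < p := (Fact.out : p.Prime).one_lt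
  have hp1 : 0 < p := by omega
  set a : ℕ → ENNReal := fun n =>
    moduleLength A ↥(levelSpan A B ξ n M (Sg : Set M)) / (p : ENNReal) ^ (n * d) with ha
  have hanti : Antitone a := normSeq_antitone A B ξ M hξ hp2 (Sg : Set M)
  -- key step: the sequence for a finset S dominated by / dominating the Sg-sequence
  have hcompare : ∀ (S T : Finset M) (n₀ : ℕ),
      (∀ s ∈ S, (s : M) ∈ levelSpan A B ξ n₀ M (T : Set M)) → ∀ m, n₀ ≤ m →
      moduleLength A ↥(levelSpan A B ξ m M (S : Set M)) / (p : ENNReal) ^ (m * d) ≤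
      moduleLength A ↥(levelSpan A B ξ m M (T : Set M)) / (p : ENNReal) ^ (m * d) := by
    intro S T n₀ h m hm
    refine ENNReal.div_le_div_right (moduleLength_mono ?_) _
    refine levelSpan_le_levelSpan A B ξ M fun s hs => ?_
    exact levelSpan_mono_level A B ξ M hξ hp1 hm (T : Set M) (h s hs)
  have key : normalizedLength A B p ξ M = ⨅ n, a n := by
    refine le_antisymm ?_ ?_
    · refine iSup_le fun N => iSup_le fun hN => ?_
      obtain ⟨S, hS⟩ := hN
      refine le_iInf fun n => ?_
      obtain ⟨n₀, hn₀⟩ := exists_level_finset A B ξ M hξ hunion hp1 S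
        (fun s _ => by rw [hSg]; exact Submodule.mem_top)
      refine le_trans (iInf_le _ S) (le_trans (iInf_le _ hS) ?_)
      refine le_trans (iInf_le _ (max n n₀)) ?_
      refine le_trans (hcompare S Sg n₀ hn₀ (max n n₀) (le_max_right _ _)) ?_
      exact hanti (le_max_left _ _)
    · refine le_trans ?_ (le_iSup₂ (f := fun (N : Submodule B M) (_ : N.FG) =>
        ⨅ (S : Finset M) (_ : Submodule.span B (S : Set M) = N) (n : ℕ),
          moduleLength A ↥(levelSpan A B ξ n M (S : Set M)) / (p : ENNReal) ^ (n * d))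
        ⊤ ⟨Sg, hSg⟩)
      refine le_iInf fun S => le_iInf fun hS => le_iInf fun n => ?_
      obtain ⟨n₂, hn₂⟩ := exists_level_finset A B ξ M hξ hunion hp1 Sg
        (fun s _ => by rw [hS]; exact Submodule.mem_top)
      refine le_trans (iInf_le _ (max n n₂)) ?_
      refine le_trans (hcompare Sg S n₂ hn₂ (max n n₂) (le_max_right _ _)) ?_
      exact normSeq_antitone A B ξ M hξ hp2 (S : Set M) (le_max_left _ _)
  rw [key]
  exact tendsto_atTop_iInf hanti
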